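/- Let w = w(n) be a function with w(n) → ∞ as n → ∞, let p = p(n) satisfy (ln n + ln ln n + w(n))/n ≤ p(n) ≤ 10·ln n / n, and let C be a fixed positive integer. Then whp the random graph G ~ G(n,p(n)) satisfies: between any two vertices u, v ∈ [n] there are at most 3 trails of length at most C. -/

import Mathlib

open MeasureTheory Filter

/-- The Bernoulli measure on `Bool` with success probability `p`. -/
noncomputable def bernoulliBool (p : ℝ) : Measure Bool :=
  (ENNReal.ofReal p) • Measure.dirac true + (ENNReal.ofReal (1 - p)) • Measure.dirac false

/-- The binomial random graph measure `G(n,p)`: each potential edge (pair of distinct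
vertices of `Fin n`) is present independently with probability `p`. An outcome is an
indicator function on unordered pairs. -/
noncomputable def gnp (n : ℕ) (p : ℝ) : Measure (Sym2 (Fin n) → Bool) :=
  Measure.pi fun _ => bernoulliBool p

/-- The simple graph on `[n]` determined by an outcome `ω` of `G(n,p)`. -/
def graphOf {n : ℕ} (ω : Sym2 (Fin n) → Bool) : SimpleGraph (Fin n) where
  Adj v w := v ≠ w ∧ ω s(v, w) = true
  symm := by
    constructor
    intro v w h
    exact ⟨h.1.symm, by rw [Sym2.eq_swap]; exact h.2⟩
  loopless := by
    constructor
    intro v h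
    exact h.1 rfl

instance graphOfDecidableAdj {n : ℕ} (ω : Sym2 (Fin n) → Bool) :
    DecidableRel (graphOf ω).Adj :=
  fun v w => inferInstanceAs (Decidable (v ≠ w ∧ ω s(v, w) = true))

set_option linter.unusedSectionVars false
set_option maxHeartbeats 1000000

open SimpleGraph

namespace St6

variable {V : Type*} [Fintype V] [DecidableEq V]

def vset (F : Set (Sym2 V)) : Set V := {x | ∃ e ∈ F, x ∈ e}

lemma two_le_deg {H : SimpleGraph V} {x y z : V} (hy : H.Adj x y) (hz : H.Adj x z)
    (hyz : y ≠ z) : 2 ≤ (H.neighborSet x).ncard := by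
  have h : 1 < (H.neighborSet x).ncard := (Set.one_lt_ncard (Set.toFinite _)).2 ⟨y, hy, z, hz, hyz⟩
  omega

lemma two_le_deg_of_edges {H : SimpleGraph V} {x : V} {e₁ e₂ : Sym2 V}
    (h1 : e₁ ∈ H.edgeSet) (h2 : e₂ ∈ H.edgeSet) (hx1 : x ∈ e₁) (hx2 : x ∈ e₂)
    (hne : e₁ ≠ e₂) : 2 ≤ (H.neighborSet x).ncard := by
  obtain ⟨y, rfl⟩ := Sym2.mem_iff_exists.1 hx1
  obtain ⟨z, rfl⟩ := Sym2.mem_iff_exists.1 hx2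
  exact two_le_deg ((H.mem_edgeSet).1 h1) ((H.mem_edgeSet).1 h2)
    (fun h => hne (by rw [h]))

lemma exists_first_edge {H : SimpleGraph V} {a b : V} (q : H.Walk a b) (hab : a ≠ b) :
    ∃ c, H.Adj a c ∧ s(a, c) ∈ q.edges := by
  cases q with
  | nil => exact absurd rfl hab
  | cons h q => exact ⟨_, h, by simp⟩

lemma exists_last_edge {H : SimpleGraph V} {a b : V} (q : H.Walk a b) (hab : a ≠ b) :
    ∃ c, H.Adj b c ∧ s(b, c) ∈ q.edges := by
  obtain ⟨c, hc, hm⟩ := exists_first_edge q.reverse (Ne.symm hab)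
  exact ⟨c, hc, by simpa using hm⟩

lemma not_mem_edge_of_leaf {H : SimpleGraph V} {x : V}
    (hx : (H.neighborSet x).ncard ≤ 1) :
    ∀ {u v : V} (q : H.Walk u v), q.IsTrail → x ≠ u → x ≠ v →
      ∀ e ∈ q.edges, x ∉ e := by
  intro u v q
  induction q with
  | nil => simp
  | @cons u b v h q ih =>
    intro hq hu hv e he hxe
    rw [Walk.edges_cons, List.mem_cons] at he
    obtain ⟨hq1, hq2⟩ := (Walk.isTrail_cons h q).1 hq
    rcases he with rfl | he
    · -- e = s(u, b); x ∈ e so x = b (x ≠ u)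
      have hxb : x = b := by
        rcases Sym2.mem_iff.1 hxe with h' | h'
        · exact absurd h' hu
        · exact h'
      subst hxb
      -- q : Walk x v with x ≠ v, so q has a first edge at x distinct from s(u,x)
      obtain ⟨c, hc, hm⟩ := exists_first_edge q hv
      have hne : s(u, x) ≠ s(x, c) := fun h' => hq2 (h' ▸ hm)
      have := two_le_deg_of_edges (H.mem_edgeSet.2 h) (H.mem_edgeSet.2 hc)
        (Sym2.mem_mk_right u x) (Sym2.mem_mk_left x c) hne
      omega
    · by_cases hxb : x = b
      · subst hxb
        have hne : s(u, x) ≠ e := fun h' => hq2 (h' ▸ he)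
        have := two_le_deg_of_edges (H.mem_edgeSet.2 h) (q.edges_subset_edgeSet he)
          (Sym2.mem_mk_right u x) hxe hne
        omega
      · exact ih hq1 hxb hv e he hxe

lemma closed_trail_nil {H : SimpleGraph V} {z : V} (hz : (H.neighborSet z).ncard ≤ 1)
    (q : H.Walk z z) (hq : q.IsTrail) : q = Walk.nil := by
  cases q with
  | nil => rfl
  | @cons _ b _ h q1 =>
    exfalso
    obtain ⟨hq1, hq2⟩ := (Walk.isTrail_cons h q1).1 hq
    obtain ⟨c, hc, hm⟩ := exists_last_edge q1 (h.ne')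
    have hne : s(z, b) ≠ s(z, c) := fun h' => hq2 (h' ▸ hm)
    have := two_le_deg_of_edges (H.mem_edgeSet.2 h) (H.mem_edgeSet.2 hc)
      (Sym2.mem_mk_left z b) (Sym2.mem_mk_left z c) hne
    omega

lemma trails_finite (H : SimpleGraph V) (u v : V) :
    {q : H.Walk u v | q.IsTrail}.Finite := by
  classical
  letI : DecidableRel H.Adj := Classical.decRel _
  letI := SimpleGraph.fintypeSetWalkLengthLT H u v (Fintype.card (Sym2 V) + 1)
  refine Set.Finite.subset (Set.toFinite {q : H.Walk u v | q.length < Fintype.card (Sym2 V) + 1}) ?_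
  intro q hq
  have h1 := hq.edges_nodup.length_le_card
  rw [Walk.length_edges] at h1
  simpa using Nat.lt_succ_of_le h1

lemma trail_eq : ∀ (N : ℕ) (H : SimpleGraph V), H.edgeSet.ncard ≤ N →
    ∀ (u v : V), (∀ x, H.Reachable u x → (H.neighborSet x).ncard ≤ 2) →
    ∀ (q r : H.Walk u v), q.IsTrail → r.IsTrail →
    q.edges.head? = r.edges.head? → q = r := by
  intro N
  induction N with
  | zero =>
    intro H hN u v _ q r hq hr hh
    have hE : H.edgeSet = ∅ :=
      (Set.ncard_eq_zero (Set.toFinite H.edgeSet)).1 (Nat.le_zero.1 hN)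
    cases q with
    | nil =>
      cases r with
      | nil => rfl
      | cons h' r1 => exact absurd (H.mem_edgeSet.2 h') (by rw [hE]; exact Set.notMem_empty _)
    | cons h q1 => exact absurd (H.mem_edgeSet.2 h) (by rw [hE]; exact Set.notMem_empty _)
  | succ N ih =>
    intro H hN u v hdeg q r hq hr hh
    cases q with
    | nil =>
      cases r with
      | nil => rfl
      | cons h' r1 => simp [Walk.edges_cons] at hh
    | @cons _ b _ h q1 =>
      cases r with
      | nil => simp [Walk.edges_cons] at hh
      | @cons _ c _ h' r1 =>
        rw [Walk.edges_cons, Walk.edges_cons, List.head?_cons, List.head?_cons] at hh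
        have hbc : b = c := Sym2.congr_right.1 (Option.some.inj hh)
        subst hbc
        obtain ⟨hq1, hq2⟩ := (Walk.isTrail_cons h q1).1 hq
        obtain ⟨hr1, hr2⟩ := (Walk.isTrail_cons h' r1).1 hr
        set e : Sym2 V := s(u, b) with he_def
        set H' := H.deleteEdges {e} with hH'
        have hsubq : ∀ e' ∈ q1.edges, e' ∈ H'.edgeSet := by
          intro e' he'
          rw [hH', SimpleGraph.edgeSet_deleteEdges]
          exact ⟨q1.edges_subset_edgeSet he', by
            simp only [Set.mem_singleton_iff]; rintro rfl; exact hq2 he'⟩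
        have hsubr : ∀ e' ∈ r1.edges, e' ∈ H'.edgeSet := by
          intro e' he'
          rw [hH', SimpleGraph.edgeSet_deleteEdges]
          exact ⟨r1.edges_subset_edgeSet he', by
            simp only [Set.mem_singleton_iff]; rintro rfl; exact hr2 he'⟩
        have hN' : H'.edgeSet.ncard ≤ N := by
          have hlt : (H.edgeSet \ {e}).ncard < H.edgeSet.ncard :=
            Set.ncard_diff_singleton_lt_of_mem (H.mem_edgeSet.2 h) (Set.toFinite _)
          rw [hH', SimpleGraph.edgeSet_deleteEdges]
          omega
        have hle : H' ≤ H := SimpleGraph.deleteEdges_le _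
        have hdeg' : ∀ x, H'.Reachable b x → (H'.neighborSet x).ncard ≤ 2 := by
          intro x hx
          refine le_trans (Set.ncard_le_ncard ?_ (Set.toFinite _))
            (hdeg x ((h.reachable).trans (hx.mono hle)))
          intro y hy
          exact hle hy
        -- degree of b in H' is at most 1
        have hdb : (H'.neighborSet b).ncard ≤ 1 := by
          have hsub : H'.neighborSet b ⊆ H.neighborSet b \ {u} := by
            intro y hy
            have hy' : (H.deleteEdges {e}).Adj b y := hy
            rw [SimpleGraph.deleteEdges_adj] at hy'
            refine ⟨hy'.1, ?_⟩
            simp only [Set.mem_singleton_iff]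
            rintro rfl
            exact hy'.2 (by rw [he_def, Sym2.eq_swap]; exact Set.mem_singleton _)
          have h1 : (H.neighborSet b \ {u}).ncard < (H.neighborSet b).ncard :=
            Set.ncard_diff_singleton_lt_of_mem h.symm (Set.toFinite _)
          have h2 := hdeg b h.reachable
          have h3 := Set.ncard_le_ncard hsub (Set.toFinite _)
          omega
        have hh' : q1.edges.head? = r1.edges.head? := by
          cases q1 with
          | nil =>
            cases r1 with
            | nil => rfl
            | cons h2 r2 =>
              -- r1 : Walk b b nontrivial trail in H', contradiction
              exfalso
              have htr : ((Walk.cons h2 r2).transfer H' hsubr).IsTrail := by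
                rw [Walk.isTrail_def, Walk.edges_transfer]
                exact hr1.edges_nodup
              have := closed_trail_nil hdb _ htr
              have := congrArg Walk.edges this
              rw [Walk.edges_transfer] at this
              simp [Walk.edges_cons] at this
          | @cons _ b2 _ h2 q2 =>
            cases r1 with
            | nil =>
              exfalso
              have htr : ((Walk.cons h2 q2).transfer H' hsubq).IsTrail := by
                rw [Walk.isTrail_def, Walk.edges_transfer]
                exact hq1.edges_nodup
              have := closed_trail_nil hdb _ htr
              have := congrArg Walk.edges this
              rw [Walk.edges_transfer] at this
              simp [Walk.edges_cons] at this
            | @cons _ b3 _ h3 r2 =>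
              rw [Walk.edges_cons, Walk.edges_cons, List.head?_cons, List.head?_cons]
              have hb2 : b2 ∈ H'.neighborSet b := by
                have := hsubq s(b, b2) (by rw [Walk.edges_cons]; exact List.mem_cons_self)
                exact H'.mem_edgeSet.1 this
              have hb3 : b3 ∈ H'.neighborSet b := by
                have := hsubr s(b, b3) (by rw [Walk.edges_cons]; exact List.mem_cons_self)
                exact H'.mem_edgeSet.1 this
              have : b2 = b3 := (Set.ncard_le_one (Set.toFinite _)).1 hdb b2 hb2 b3 hb3
              rw [this]
        have hq1t : (q1.transfer H' hsubq).IsTrail := by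
          rw [Walk.isTrail_def, Walk.edges_transfer]; exact hq1.edges_nodup
        have hr1t : (r1.transfer H' hsubr).IsTrail := by
          rw [Walk.isTrail_def, Walk.edges_transfer]; exact hr1.edges_nodup
        have hh'' : (q1.transfer H' hsubq).edges.head? = (r1.transfer H' hsubr).edges.head? := by
          rw [Walk.edges_transfer, Walk.edges_transfer]; exact hh'
        have heq := ih H' hN' b v hdeg' _ _ hq1t hr1t hh''
        have hq1r1 : q1 = r1 := by
          have e1 : (q1.transfer H' hsubq).transfer H
              (by intro e' he'; rw [Walk.edges_transfer] at he'; exact q1.edges_subset_edgeSet he') = q1 := by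
            rw [Walk.transfer_transfer, Walk.transfer_self]
          have e2 : (r1.transfer H' hsubr).transfer H
              (by intro e' he'; rw [Walk.edges_transfer] at he'; exact r1.edges_subset_edgeSet he') = r1 := by
            rw [Walk.transfer_transfer, Walk.transfer_self]
          rw [← e1, ← e2]
          congr 1
        rw [hq1r1]

lemma isTrail_transfer {H H' : SimpleGraph V} {u v : V} (q : H.Walk u v)
    (hs : ∀ e ∈ q.edges, e ∈ H'.edgeSet) (hq : q.IsTrail) :
    (q.transfer H' hs).IsTrail := by
  rw [Walk.isTrail_def, Walk.edges_transfer]; exact hq.edges_nodup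

lemma count_le_three_of_deg_le_two (H : SimpleGraph V) (u v : V)
    (hdeg : ∀ x, H.Reachable u x → (H.neighborSet x).ncard ≤ 2) :
    {q : H.Walk u v | q.IsTrail}.ncard ≤ 3 := by
  set S := {q : H.Walk u v | q.IsTrail} with hS
  set f : H.Walk u v → Option (Sym2 V) := fun q => q.edges.head? with hf
  have hinj : Set.InjOn f S := by
    intro q hq r hr hfe
    exact trail_eq H.edgeSet.ncard H le_rfl u v hdeg q r hq hr hfe
  have himg : f '' S ⊆ insert none ((fun a => some s(u, a)) '' H.neighborSet u) := by
    rintro y ⟨q, hq, rfl⟩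
    cases q with
    | nil => exact Set.mem_insert _ _
    | @cons _ b _ h q1 =>
      refine Set.mem_insert_of_mem _ ⟨b, h, ?_⟩
      simp [hf, Walk.edges_cons]
  calc S.ncard = (f '' S).ncard := (Set.ncard_image_of_injOn hinj).symm
    _ ≤ (insert none ((fun a => some s(u, a)) '' H.neighborSet u)).ncard :=
        Set.ncard_le_ncard himg (Set.Finite.insert _ ((Set.toFinite _).image _))
    _ ≤ ((fun a => some s(u, a)) '' H.neighborSet u).ncard + 1 := Set.ncard_insert_le _ _
    _ ≤ (H.neighborSet u).ncard + 1 := by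
        have := Set.ncard_image_le (s := H.neighborSet u)
          (f := fun a => some s(u, a)) (Set.toFinite _)
        omega
    _ ≤ 3 := by have := hdeg u (Reachable.refl u); omega

lemma count_le_delete_unused {H : SimpleGraph V} {u v x : V} {e : Sym2 V}
    (he : e ∈ H.edgeSet) (hx : x ∈ e) (hxu : x ≠ u) (hxv : x ≠ v)
    (hdx : (H.neighborSet x).ncard ≤ 1) :
    {q : H.Walk u v | q.IsTrail}.ncard ≤
      {q : (H.deleteEdges {e}).Walk u v | q.IsTrail}.ncard := by
  set H' := H.deleteEdges {e} with hH'
  set g : H'.Walk u v → H.Walk u v := fun q' =>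
    q'.transfer H (fun e' he' => SimpleGraph.edgeSet_mono (SimpleGraph.deleteEdges_le {e}) (q'.edges_subset_edgeSet he')) with hg
  have hsub : {q : H.Walk u v | q.IsTrail} ⊆ g '' {q : H'.Walk u v | q.IsTrail} := by
    intro q hq
    have hqe : ∀ e' ∈ q.edges, e' ∈ H'.edgeSet := by
      intro e' he'
      rw [hH', SimpleGraph.edgeSet_deleteEdges]
      refine ⟨q.edges_subset_edgeSet he', ?_⟩
      simp only [Set.mem_singleton_iff]
      rintro rfl
      exact not_mem_edge_of_leaf hdx q hq hxu hxv e' he' hx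
    refine ⟨q.transfer H' hqe, isTrail_transfer q hqe hq, ?_⟩
    rw [hg]
    simp only
    rw [Walk.transfer_transfer, Walk.transfer_self]
  calc {q : H.Walk u v | q.IsTrail}.ncard
      ≤ (g '' {q : H'.Walk u v | q.IsTrail}).ncard :=
        Set.ncard_le_ncard hsub ((trails_finite H' u v).image _)
    _ ≤ {q : H'.Walk u v | q.IsTrail}.ncard := Set.ncard_image_le (trails_finite H' u v)

lemma count_le_strip {H : SimpleGraph V} {u v b0 : V} (huv : u ≠ v) (h0 : H.Adj u b0)
    (hu : (H.neighborSet u).ncard ≤ 1) :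
    {q : H.Walk u v | q.IsTrail}.ncard ≤
      {q : (H.deleteEdges {s(u, b0)}).Walk b0 v | q.IsTrail}.ncard := by
  set e : Sym2 V := s(u, b0) with he_def
  set H' := H.deleteEdges {e} with hH'
  set g : H'.Walk b0 v → H.Walk u v := fun q' =>
    Walk.cons h0 (q'.transfer H (fun e' he' =>
      SimpleGraph.edgeSet_mono (SimpleGraph.deleteEdges_le {e}) (q'.edges_subset_edgeSet he'))) with hg
  have hsub : {q : H.Walk u v | q.IsTrail} ⊆ g '' {q : H'.Walk b0 v | q.IsTrail} := by
    intro q hq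
    cases q with
    | nil => exact absurd rfl huv
    | @cons _ b _ h q1 =>
      obtain ⟨hq1, hq2⟩ := (Walk.isTrail_cons h q1).1 hq
      have hb : b = b0 := (Set.ncard_le_one (Set.toFinite _)).1 hu b h b0 h0
      subst hb
      have hqe : ∀ e' ∈ q1.edges, e' ∈ H'.edgeSet := by
        intro e' he'
        rw [hH', SimpleGraph.edgeSet_deleteEdges]
        refine ⟨q1.edges_subset_edgeSet he', ?_⟩
        simp only [Set.mem_singleton_iff]
        rintro rfl
        exact hq2 he'
      refine ⟨q1.transfer H' hqe, isTrail_transfer q1 hqe hq1, ?_⟩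
      rw [hg]
      simp only
      rw [Walk.transfer_transfer, Walk.transfer_self]
  calc {q : H.Walk u v | q.IsTrail}.ncard
      ≤ (g '' {q : H'.Walk b0 v | q.IsTrail}).ncard :=
        Set.ncard_le_ncard hsub ((trails_finite H' b0 v).image _)
    _ ≤ {q : H'.Walk b0 v | q.IsTrail}.ncard := Set.ncard_image_le (trails_finite H' b0 v)

lemma count_le_rev (H : SimpleGraph V) (u v : V) :
    {q : H.Walk u v | q.IsTrail}.ncard ≤ {q : H.Walk v u | q.IsTrail}.ncard := by
  have hsub : {q : H.Walk u v | q.IsTrail} ⊆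
      (fun q : H.Walk v u => q.reverse) '' {q : H.Walk v u | q.IsTrail} := by
    intro q hq
    exact ⟨q.reverse, Walk.IsTrail.reverse _ hq, q.reverse_reverse⟩
  calc {q : H.Walk u v | q.IsTrail}.ncard
      ≤ ((fun q : H.Walk v u => q.reverse) '' {q : H.Walk v u | q.IsTrail}).ncard :=
        Set.ncard_le_ncard hsub ((trails_finite H v u).image _)
    _ ≤ _ := Set.ncard_image_le (trails_finite H v u)

lemma deg_eq_ncard (H : SimpleGraph V) [DecidableRel H.Adj] (a : V) :
    H.degree a = (H.neighborSet a).ncard := by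
  show (H.neighborFinset a).card = _
  rw [← Set.ncard_coe_finset]
  congr 1
  ext y
  simp [SimpleGraph.mem_neighborFinset]

lemma degree_two_of_sparse (H : SimpleGraph V)
    (hsp : ∀ F : Set (Sym2 V), F ⊆ H.edgeSet → F.ncard ≤ (vset F).ncard)
    (hmin : ∀ x ∈ H.support, 2 ≤ (H.neighborSet x).ncard) (u : V) :
    ∀ x, H.Reachable u x → (H.neighborSet x).ncard ≤ 2 := by
  classical
  intro x0 hx0
  by_contra hc
  push_neg at hc  -- 2 < ncard
  -- the reachable part of H
  set H'' : SimpleGraph V :=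
    { Adj := fun a b => H.Adj a b ∧ H.Reachable u a ∧ H.Reachable u b
      symm := by constructor; rintro a b ⟨h1, h2, h3⟩; exact ⟨h1.symm, h3, h2⟩
      loopless := by constructor; rintro a ⟨h1, -, -⟩; exact H.loopless.irrefl a h1 } with hH''
  letI : DecidableRel H''.Adj := Classical.decRel _
  have hadj : ∀ a b : V, H''.Adj a b ↔ (H.Adj a b ∧ H.Reachable u a ∧ H.Reachable u b) := by
    intro a b; rfl
  have hnb : ∀ a, H.Reachable u a → H''.neighborSet a = H.neighborSet a := by
    intro a ha
    ext y
    simp only [SimpleGraph.mem_neighborSet, hadj]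
    exact ⟨fun h => h.1, fun h => ⟨h, ha, ha.trans h.reachable⟩⟩
  have hle : H'' ≤ H := fun a b h => (hadj a b).1 h |>.1
  -- sparsity applied to edges of H''
  have hspp := hsp H''.edgeSet (SimpleGraph.edgeSet_mono hle)
  -- vset of edgeSet is the support
  have hvs : vset H''.edgeSet = H''.support := by
    ext x
    constructor
    · rintro ⟨e, he, hx⟩
      obtain ⟨y, rfl⟩ := Sym2.mem_iff_exists.1 hx
      exact ⟨y, H''.mem_edgeSet.1 he⟩
    · rintro ⟨y, hy⟩
      exact ⟨s(x, y), H''.mem_edgeSet.2 hy, Sym2.mem_mk_left _ _⟩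
  -- support finset
  set sF : Finset V := Finset.univ.filter (fun a => a ∈ H''.support) with hsF
  have hsF_card : sF.card = H''.support.ncard := by
    rw [← Set.ncard_coe_finset]
    congr 1
    ext a
    simp [hsF]
  -- handshake
  have hhs := SimpleGraph.sum_degrees_eq_twice_card_edges H''
  have hzero : ∀ a ∈ Finset.univ, a ∉ sF → H''.degree a = 0 := by
    intro a _ ha
    rw [hsF] at ha
    simp only [Finset.mem_filter, Finset.mem_univ, true_and] at ha
    rw [deg_eq_ncard]
    rw [Set.ncard_eq_zero (Set.toFinite _)]
    ext y
    simp only [SimpleGraph.mem_neighborSet, Set.mem_empty_iff_false, iff_false]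
    intro h
    exact ha ⟨y, h⟩
  have hsum : ∑ a ∈ sF, H''.degree a = 2 * H''.edgeFinset.card := by
    rw [← hhs]
    exact Finset.sum_subset (Finset.subset_univ sF) hzero
  -- x0 is in sF with degree ≥ 3
  have hx0deg : 2 < H''.degree x0 := by
    rw [deg_eq_ncard, hnb x0 hx0]; exact hc
  have hx0mem : x0 ∈ sF := by
    rw [hsF]
    simp only [Finset.mem_filter, Finset.mem_univ, true_and]
    have h5 : (H''.neighborSet x0).ncard ≠ 0 := by rw [hnb x0 hx0]; omega
    obtain ⟨y, hy⟩ := Set.nonempty_of_ncard_ne_zero h5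
    exact ⟨y, hy⟩
  -- every vertex of the support has degree ≥ 2
  have hdeg2 : ∀ a ∈ sF, 2 ≤ H''.degree a := by
    intro a ha
    rw [hsF] at ha
    simp only [Finset.mem_filter, Finset.mem_univ, true_and] at ha
    obtain ⟨y, hy⟩ := ha
    have har : H.Reachable u a := ((hadj a y).1 hy).2.1
    rw [deg_eq_ncard, hnb a har]
    exact hmin a ⟨y, ((hadj a y).1 hy).1⟩
  -- strict inequality
  have hstrict : 2 * sF.card < ∑ a ∈ sF, H''.degree a := by
    calc 2 * sF.card = ∑ _a ∈ sF, 2 := by rw [Finset.sum_const, smul_eq_mul, mul_comm]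
    _ < ∑ a ∈ sF, H''.degree a := Finset.sum_lt_sum hdeg2 ⟨x0, hx0mem, hx0deg⟩
  -- edge count
  have hec : H''.edgeFinset.card = H''.edgeSet.ncard := by
    rw [← Set.ncard_coe_finset]
    congr 1
    exact SimpleGraph.coe_edgeFinset _
  rw [hsum, hec] at hstrict
  rw [hvs] at hspp
  omega

lemma edge_ncard_lt {H : SimpleGraph V} {e : Sym2 V} (he : e ∈ H.edgeSet) :
    (H.deleteEdges {e}).edgeSet.ncard < H.edgeSet.ncard := by
  rw [SimpleGraph.edgeSet_deleteEdges]
  exact Set.ncard_diff_singleton_lt_of_mem he (Set.toFinite _)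

lemma sparse_mono {H : SimpleGraph V} {H' : SimpleGraph V} (hle : H' ≤ H)
    (hsp : ∀ F : Set (Sym2 V), F ⊆ H.edgeSet → F.ncard ≤ (vset F).ncard) :
    ∀ F : Set (Sym2 V), F ⊆ H'.edgeSet → F.ncard ≤ (vset F).ncard :=
  fun F hF => hsp F (hF.trans (SimpleGraph.edgeSet_mono hle))

lemma count_trails_le_three : ∀ (N : ℕ) (H : SimpleGraph V), H.edgeSet.ncard ≤ N →
    (∀ F : Set (Sym2 V), F ⊆ H.edgeSet → F.ncard ≤ (vset F).ncard) →
    ∀ u v : V, {q : H.Walk u v | q.IsTrail}.ncard ≤ 3 := by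
  intro N
  induction N with
  | zero =>
    intro H hN hsp u v
    apply count_le_three_of_deg_le_two
    intro x _
    have hsub : H.neighborSet x ⊆ ∅ := by
      intro y hy
      have : s(x, y) ∈ H.edgeSet := H.mem_edgeSet.2 hy
      have hE : H.edgeSet = ∅ := (Set.ncard_eq_zero (Set.toFinite _)).1 (Nat.le_zero.1 hN)
      rw [hE] at this
      exact this
    have := Set.ncard_le_ncard hsub (Set.toFinite _)
    simp at this
    omega
  | succ N ih =>
    intro H hN hsp u v
    by_cases hA : ∃ x e, e ∈ H.edgeSet ∧ x ∈ e ∧ x ≠ u ∧ x ≠ v ∧ (H.neighborSet x).ncard ≤ 1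
    · obtain ⟨x, e, he, hx, hxu, hxv, hdx⟩ := hA
      refine le_trans (count_le_delete_unused he hx hxu hxv hdx) ?_
      refine ih (H.deleteEdges {e}) ?_ (sparse_mono (SimpleGraph.deleteEdges_le _) hsp) u v
      have := edge_ncard_lt he
      omega
    · push_neg at hA
      by_cases hu2 : (H.neighborSet u).ncard ≤ 1
      · by_cases huv : u = v
        · subst huv
          -- only the nil trail
          have hsub : {q : H.Walk u u | q.IsTrail} ⊆ {Walk.nil} := by
            intro q hq
            exact closed_trail_nil hu2 q hq
          refine le_trans (Set.ncard_le_ncard hsub (Set.finite_singleton _)) ?_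
          simp [Set.ncard_singleton]
        · by_cases hex : ∃ b0, H.Adj u b0
          · obtain ⟨b0, h0⟩ := hex
            refine le_trans (count_le_strip huv h0 hu2) ?_
            refine ih _ ?_ (sparse_mono (SimpleGraph.deleteEdges_le _) hsp) b0 v
            have := edge_ncard_lt (H.mem_edgeSet.2 h0)
            omega
          · push_neg at hex
            have hsub : {q : H.Walk u v | q.IsTrail} ⊆ (∅ : Set (H.Walk u v)) := by
              intro q hq
              obtain ⟨c, hc, -⟩ := exists_first_edge q huv
              exact absurd hc (hex c)
            have := Set.ncard_le_ncard hsub (Set.finite_empty)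
            simp at this
            omega
      · by_cases hv2 : (H.neighborSet v).ncard ≤ 1
        · have huv : u ≠ v := by rintro rfl; exact hu2 hv2
          refine le_trans (count_le_rev H u v) ?_
          by_cases hex : ∃ b0, H.Adj v b0
          · obtain ⟨b0, h0⟩ := hex
            refine le_trans (count_le_strip (Ne.symm huv) h0 hv2) ?_
            refine ih _ ?_ (sparse_mono (SimpleGraph.deleteEdges_le _) hsp) b0 u
            have := edge_ncard_lt (H.mem_edgeSet.2 h0)
            omega
          · push_neg at hex
            have hsub : {q : H.Walk v u | q.IsTrail} ⊆ (∅ : Set (H.Walk v u)) := by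
              intro q hq
              obtain ⟨c, hc, -⟩ := exists_first_edge q (Ne.symm huv)
              exact absurd hc (hex c)
            have := Set.ncard_le_ncard hsub (Set.finite_empty)
            simp at this
            omega
        · -- case C
          apply count_le_three_of_deg_le_two
          apply degree_two_of_sparse H hsp
          intro x hxs
          obtain ⟨y, hy⟩ := (H.mem_support).1 hxs
          by_cases hxu : x = u
          · subst hxu; omega
          · by_cases hxv : x = v
            · subst hxv; omega
            · have := hA x s(x, y) (H.mem_edgeSet.2 hy) (Sym2.mem_mk_left _ _) hxu hxv
              omega

def vfin {n : ℕ} (F : Finset (Sym2 (Fin n))) : Finset (Fin n) :=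
  Finset.univ.filter (fun x => ∃ e ∈ F, x ∈ e)

lemma good_of_sparse {n : ℕ} (ω : Sym2 (Fin n) → Bool) (C : ℕ)
    (hs : ∀ F : Finset (Sym2 (Fin n)), (↑F ⊆ (graphOf ω).edgeSet) → F.card ≤ 4*C →
      F.card ≤ (vfin F).card) :
    ∀ u v : Fin n, u ≠ v →
      Set.ncard {q : (graphOf ω).Walk u v | q.IsTrail ∧ q.length ≤ C} ≤ 3 := by
  classical
  intro u v huv
  set G := graphOf ω with hG
  by_contra h3
  rw [not_le] at h3
  have hfinS : {q : G.Walk u v | q.IsTrail ∧ q.length ≤ C}.Finite :=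
    (trails_finite G u v).subset (fun q hq => hq.1)
  rw [Set.ncard_eq_toFinset_card _ hfinS] at h3
  obtain ⟨t, ht_sub, ht_card⟩ := Finset.exists_subset_card_eq (show 4 ≤ hfinS.toFinset.card by omega)
  have ht_mem : ∀ q ∈ t, q.IsTrail ∧ q.length ≤ C := by
    intro q hq
    have := ht_sub hq
    rwa [Set.Finite.mem_toFinset] at this
  set F : Finset (Sym2 (Fin n)) := t.biUnion (fun q => q.edges.toFinset) with hF
  have hFE : ↑F ⊆ G.edgeSet := by
    intro e he
    rw [hF] at he
    simp only [Finset.coe_biUnion, Set.mem_iUnion, Finset.mem_coe, List.mem_toFinset] at he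
    obtain ⟨q, hq, he⟩ := he
    exact q.edges_subset_edgeSet he
  have hFcard : F.card ≤ 4 * C := by
    calc F.card ≤ ∑ q ∈ t, q.edges.toFinset.card := Finset.card_biUnion_le
      _ ≤ ∑ q ∈ t, C := by
          refine Finset.sum_le_sum ?_
          intro q hq
          refine le_trans (List.toFinset_card_le _) ?_
          rw [Walk.length_edges]
          exact (ht_mem q hq).2
      _ = 4 * C := by rw [Finset.sum_const, ht_card, smul_eq_mul]
  set H := SimpleGraph.fromEdgeSet (↑F : Set (Sym2 (Fin n))) with hH
  have hHe : H.edgeSet = ↑F := by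
    rw [hH, SimpleGraph.edgeSet_fromEdgeSet]
    ext e
    simp only [Set.mem_diff, Set.mem_setOf_eq, Finset.mem_coe, and_iff_left_iff_imp]
    intro he
    exact G.not_isDiag_of_mem_edgeSet (hFE he)
  -- sparsity for H
  have hsp : ∀ F' : Set (Sym2 (Fin n)), F' ⊆ H.edgeSet → F'.ncard ≤ (vset F').ncard := by
    intro F' hF'
    rw [hHe] at hF'
    have hfin : F'.Finite := (F.finite_toSet).subset hF'
    set Ft := hfin.toFinset with hFt
    have hFtF : Ft ⊆ F := by
      intro e he
      rw [hFt, Set.Finite.mem_toFinset] at he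
      exact hF' he
    have h1 : ↑Ft ⊆ G.edgeSet := by
      intro e he
      exact hFE (hFtF (by exact_mod_cast he))
    have h2 : Ft.card ≤ 4 * C := le_trans (Finset.card_le_card hFtF) hFcard
    have h3 := hs Ft h1 h2
    have e1 : F'.ncard = Ft.card := by rw [Set.ncard_eq_toFinset_card _ hfin]
    have e2 : (vset F').ncard = (vfin Ft).card := by
      rw [← Set.ncard_coe_finset]
      congr 1
      ext x
      constructor
      · rintro ⟨e, he, hx⟩
        simp only [vfin, Finset.coe_filter, Finset.mem_univ, true_and, Set.mem_setOf_eq]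
        exact ⟨e, by rwa [hFt, Set.Finite.mem_toFinset], hx⟩
      · intro hx
        simp only [vfin, Finset.coe_filter, Finset.mem_univ, true_and, Set.mem_setOf_eq] at hx
        obtain ⟨e, he, hx⟩ := hx
        exact ⟨e, by rwa [hFt, Set.Finite.mem_toFinset] at he, hx⟩
    omega
  have hcount := count_trails_le_three H.edgeSet.ncard H le_rfl hsp u v
  -- now inject t into the trails of H
  set TH := (trails_finite H u v).toFinset with hTH
  set f : G.Walk u v → Option (H.Walk u v) := fun q =>
    if h : ∀ e ∈ q.edges, e ∈ H.edgeSet then some (q.transfer H h) else none with hf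
  have hprop : ∀ q ∈ t, ∀ e ∈ q.edges, e ∈ H.edgeSet := by
    intro q hq e he
    rw [hHe]
    rw [hF]
    simp only [Finset.coe_biUnion, Set.mem_iUnion, Finset.mem_coe, List.mem_toFinset]
    exact ⟨q, hq, he⟩
  have hmaps : ∀ q ∈ t, f q ∈ TH.image some := by
    intro q hq
    rw [hf]
    simp only [dif_pos (hprop q hq)]
    refine Finset.mem_image_of_mem some ?_
    rw [hTH, Set.Finite.mem_toFinset]
    exact isTrail_transfer q (hprop q hq) (ht_mem q hq).1
  have hinj : Set.InjOn f ↑t := by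
    intro q hq r hr hfe
    rw [hf] at hfe
    simp only [dif_pos (hprop q hq), dif_pos (hprop r hr), Option.some.injEq] at hfe
    have e1 : (q.transfer H (hprop q hq)).transfer G
        (by intro e' he'; rw [Walk.edges_transfer] at he'; exact q.edges_subset_edgeSet he') = q := by
      rw [Walk.transfer_transfer, Walk.transfer_self]
    have e2 : (r.transfer H (hprop r hr)).transfer G
        (by intro e' he'; rw [Walk.edges_transfer] at he'; exact r.edges_subset_edgeSet he') = r := by
      rw [Walk.transfer_transfer, Walk.transfer_self]
    rw [← e1, ← e2]
    congr 1
  have hle := Finset.card_le_card_of_injOn f hmaps hinj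
  rw [Finset.card_image_of_injective _ (Option.some_injective _)] at hle
  rw [ht_card] at hle
  have : TH.card = {q : H.Walk u v | q.IsTrail}.ncard := by
    rw [Set.ncard_eq_toFinset_card _ (trails_finite H u v)]
  omega

instance (p : ℝ) : IsFiniteMeasure (bernoulliBool p) := by
  constructor
  rw [bernoulliBool]
  simp only [Measure.add_apply, Measure.smul_apply, smul_eq_mul]
  refine ENNReal.add_lt_top.2 ⟨?_, ?_⟩ <;>
  · refine ENNReal.mul_lt_top ENNReal.ofReal_lt_top ?_
    simp only [Measure.dirac_apply, Set.mem_univ, Set.indicator_of_mem, Pi.one_apply]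
    exact ENNReal.one_lt_top

lemma bernoulliBool_true (p : ℝ) : bernoulliBool p {true} = ENNReal.ofReal p := by
  rw [bernoulliBool]
  simp [Measure.dirac_apply]

lemma bernoulliBool_univ (p : ℝ) (h0 : 0 ≤ p) (h1 : p ≤ 1) :
    bernoulliBool p Set.univ = 1 := by
  rw [bernoulliBool]
  simp only [Measure.add_apply, Measure.smul_apply, smul_eq_mul, Measure.dirac_apply,
    Set.mem_univ, Set.indicator_of_mem, Pi.one_apply, mul_one]
  rw [← ENNReal.ofReal_add h0 (by linarith)]
  norm_num

lemma gnp_univ (n : ℕ) (p : ℝ) (h0 : 0 ≤ p) (h1 : p ≤ 1) :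
    gnp n p Set.univ = 1 := by
  rw [gnp, Measure.pi_univ]
  simp only [bernoulliBool_univ p h0 h1, Finset.prod_const_one]

def cyl {n : ℕ} (F : Finset (Sym2 (Fin n))) : Set (Sym2 (Fin n) → Bool) :=
  {ω | ∀ e ∈ F, ω e = true}

lemma gnp_cyl (n : ℕ) (p : ℝ) (h0 : 0 ≤ p) (h1 : p ≤ 1) (F : Finset (Sym2 (Fin n))) :
    gnp n p (cyl F) = ENNReal.ofReal p ^ F.card := by
  classical
  have hset : cyl F = Set.pi Set.univ (fun e => if e ∈ F then ({true} : Set Bool) else Set.univ) := by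
    ext ω
    simp only [cyl, Set.mem_setOf_eq, Set.mem_pi, Set.mem_univ, forall_true_left]
    constructor
    · intro h e
      by_cases he : e ∈ F
      · simp [he, h e he]
      · simp [he]
    · intro h e he
      have := h e
      rw [if_pos he] at this
      exact this
  rw [hset, gnp, Measure.pi_pi]
  have : ∀ e : Sym2 (Fin n), (bernoulliBool p) (if e ∈ F then ({true} : Set Bool) else Set.univ)
      = if e ∈ F then ENNReal.ofReal p else 1 := by
    intro e
    by_cases he : e ∈ F
    · simp [he, bernoulliBool_true]
    · rw [if_neg he, if_neg he, bernoulliBool_univ p h0 h1]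
  rw [Finset.prod_congr rfl (fun e _ => this e)]
  rw [← Finset.prod_filter]
  rw [Finset.filter_mem_eq_inter, Finset.univ_inter, Finset.prod_const]

noncomputable def witnesses (n C : ℕ) : Finset (Finset (Sym2 (Fin n))) :=
  Finset.univ.filter
    (fun F => F.card ≤ 4*C ∧ (vfin F).card + 1 ≤ F.card)

lemma compl_good_subset (n C : ℕ) :
    {ω : Sym2 (Fin n) → Bool | ¬ ∀ u v : Fin n, u ≠ v →
      Set.ncard {q : (graphOf ω).Walk u v | q.IsTrail ∧ q.length ≤ C} ≤ 3}
    ⊆ ⋃ F ∈ witnesses n C, cyl F := by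
  intro ω hω
  simp only [Set.mem_setOf_eq] at hω
  by_contra hno
  apply hω
  simp only [Set.mem_iUnion, not_exists] at hno
  apply good_of_sparse
  intro F hFE hFc
  by_contra hcard
  push_neg at hcard
  have hW : F ∈ witnesses n C := by
    simp only [witnesses, Finset.mem_filter, Finset.mem_univ, true_and]
    exact ⟨hFc, by omega⟩
  refine hno F hW ?_
  intro e he
  have heE := hFE he
  induction e using Sym2.ind with
  | _ a b => exact ((graphOf ω).mem_edgeSet.1 heE).2

lemma witnesses_card_pos {n C : ℕ} {F : Finset (Sym2 (Fin n))} (h : F ∈ witnesses n C) :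
    1 ≤ F.card := by
  simp only [witnesses, Finset.mem_filter, Finset.mem_univ, true_and] at h
  omega

lemma witnesses_count (n C m : ℕ) (hm : 1 ≤ m) (hmC : m ≤ 4*C) (hn : 1 ≤ n) :
    ((witnesses n C).filter (fun F => F.card = m)).card ≤
      (4*C+1) * 2^((4*C+1)*(4*C+1)) * n^(m-1) := by
  classical
  set B := (Finset.range m).biUnion
    (fun s => (Finset.univ : Finset (Fin n)).powersetCard s) with hB
  have hsub : (witnesses n C).filter (fun F => F.card = m) ⊆
      B.biUnion (fun S => S.sym2.powerset) := by
    intro F hF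
    simp only [Finset.mem_filter, witnesses, Finset.mem_univ, true_and] at hF
    obtain ⟨⟨hc1, hc2⟩, hcm⟩ := hF
    rw [Finset.mem_biUnion]
    refine ⟨vfin F, ?_, ?_⟩
    · rw [hB, Finset.mem_biUnion]
      exact ⟨(vfin F).card, by rw [Finset.mem_range]; omega,
        by rw [Finset.mem_powersetCard]; exact ⟨Finset.subset_univ _, rfl⟩⟩
    · rw [Finset.mem_powerset]
      intro e he
      rw [Finset.mem_sym2_iff]
      intro a ha
      simp only [vfin, Finset.mem_filter, Finset.mem_univ, true_and]
      exact ⟨e, he, ha⟩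
  refine le_trans (Finset.card_le_card hsub) ?_
  refine le_trans (Finset.card_biUnion_le) ?_
  have hbound : ∀ S ∈ B, (S.sym2.powerset).card ≤ 2^((4*C+1)*(4*C+1)) := by
    intro S hS
    rw [hB, Finset.mem_biUnion] at hS
    obtain ⟨s, hs, hS⟩ := hS
    rw [Finset.mem_powersetCard] at hS
    rw [Finset.mem_range] at hs
    have hScard : S.card ≤ 4*C := by omega
    rw [Finset.card_powerset]
    refine Nat.pow_le_pow_right (by norm_num) ?_
    rw [Finset.card_sym2]
    calc (S.card + 1).choose 2 ≤ (S.card+1)^2 := Nat.choose_le_pow _ _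
      _ ≤ (4*C+1)^2 := Nat.pow_le_pow_left (by omega) _
      _ = (4*C+1)*(4*C+1) := by ring
  refine le_trans (Finset.sum_le_sum hbound) ?_
  rw [Finset.sum_const, smul_eq_mul]
  have hBcard : B.card ≤ (4*C+1) * n^(m-1) := by
    refine le_trans (Finset.card_biUnion_le) ?_
    have : ∀ s ∈ Finset.range m,
        ((Finset.univ : Finset (Fin n)).powersetCard s).card ≤ n^(m-1) := by
      intro s hs
      rw [Finset.mem_range] at hs
      rw [Finset.card_powersetCard, Finset.card_univ, Fintype.card_fin]
      calc n.choose s ≤ n^s := Nat.choose_le_pow _ _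
        _ ≤ n^(m-1) := Nat.pow_le_pow_right hn (by omega)
    refine le_trans (Finset.sum_le_sum this) ?_
    rw [Finset.sum_const, Finset.card_range, smul_eq_mul]
    have : m ≤ 4*C+1 := by omega
    exact Nat.mul_le_mul_right _ this
  calc B.card * 2^((4*C+1)*(4*C+1)) ≤ ((4*C+1) * n^(m-1)) * 2^((4*C+1)*(4*C+1)) :=
        Nat.mul_le_mul_right _ hBcard
    _ = (4*C+1) * 2^((4*C+1)*(4*C+1)) * n^(m-1) := by ring

lemma gnp_bad_le (n C : ℕ) (p : ℝ) (h0 : 0 ≤ p) (h1 : p ≤ 1) :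
    gnp n p (⋃ F ∈ witnesses n C, cyl F) ≤
      ∑ m ∈ Finset.range (4*C+1),
        (((witnesses n C).filter (fun F => F.card = m)).card : ENNReal) * (ENNReal.ofReal p)^m := by
  classical
  refine le_trans (measure_biUnion_finset_le _ _) ?_
  have hmaps : ∀ F ∈ witnesses n C, F.card ∈ Finset.range (4*C+1) := by
    intro F hF
    simp only [witnesses, Finset.mem_filter, Finset.mem_univ, true_and] at hF
    rw [Finset.mem_range]
    omega
  rw [← Finset.sum_fiberwise_of_maps_to hmaps (fun F => gnp n p (cyl F))]
  refine Finset.sum_le_sum ?_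
  intro m _
  have : ∀ F ∈ (witnesses n C).filter (fun F => F.card = m), gnp n p (cyl F) = (ENNReal.ofReal p)^m := by
    intro F hF
    rw [Finset.mem_filter] at hF
    rw [gnp_cyl n p h0 h1, hF.2]
  rw [Finset.sum_congr rfl this, Finset.sum_const, nsmul_eq_mul]


lemma count_zero (n C : ℕ) : ((witnesses n C).filter (fun F => F.card = 0)).card = 0 := by
  rw [Finset.card_eq_zero, Finset.eq_empty_iff_forall_notMem]
  intro F hF
  rw [Finset.mem_filter] at hF
  have := witnesses_card_pos hF.1
  omega

lemma pow_identity {n m : ℕ} (hn : 1 ≤ n) (hm : 1 ≤ m) (a : ℝ) :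
    (n:ℝ)^(m-1) * (a / n)^m = a^m / n := by
  have hn0 : (0:ℝ) < n := by exact_mod_cast hn
  have h1 : (n:ℝ)^m = (n:ℝ)^(m-1) * n := by
    rw [← pow_succ]
    congr 1
    omega
  rw [div_pow, h1, ← mul_div_assoc]
  exact mul_div_mul_left _ _ (pow_ne_zero _ (ne_of_gt hn0))

lemma bad_le_psi (n C : ℕ) (p : ℝ) (h0 : 0 ≤ p) (h1 : p ≤ 1) (hn : 1 ≤ n)
    (hple : p ≤ 10 * Real.log n / n) :
    gnp n p (⋃ F ∈ witnesses n C, cyl F) ≤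
      ENNReal.ofReal (∑ m ∈ Finset.range (4*C+1), (if m = 0 then (0:ℝ) else
        ((4*C+1) * 2^((4*C+1)*(4*C+1)) : ℝ) * (10 * Real.log n)^m / n)) := by
  have hlog : (0:ℝ) ≤ Real.log n := Real.log_nonneg (by exact_mod_cast hn)
  have hn0 : (0:ℝ) < n := by exact_mod_cast hn
  have hterm : ∀ m ∈ Finset.range (4*C+1), (0:ℝ) ≤ (if m = 0 then (0:ℝ) else
      ((4*C+1) * 2^((4*C+1)*(4*C+1)) : ℝ) * (10 * Real.log n)^m / n) := by
    intro m _
    by_cases hm : m = 0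
    · simp [hm]
    · rw [if_neg hm]
      have : (0:ℝ) ≤ (10 * Real.log n)^m := pow_nonneg (by linarith) m
      positivity
  refine le_trans (gnp_bad_le n C p h0 h1) ?_
  rw [ENNReal.ofReal_sum_of_nonneg hterm]
  refine Finset.sum_le_sum ?_
  intro m hm
  by_cases hm0 : m = 0
  · subst hm0
    rw [count_zero]
    simp
  · rw [if_neg hm0]
    rw [Finset.mem_range] at hm
    have hm1 : 1 ≤ m := by omega
    have hmC : m ≤ 4*C := by omega
    have hcnt := witnesses_count n C m hm1 hmC hn
    calc ((((witnesses n C).filter (fun F => F.card = m)).card : ℕ) : ENNReal) * (ENNReal.ofReal p)^m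
        ≤ (((4*C+1) * 2^((4*C+1)*(4*C+1)) * n^(m-1) : ℕ) : ENNReal) * (ENNReal.ofReal p)^m := by
          exact mul_le_mul_left (by exact_mod_cast hcnt) _
      _ = ENNReal.ofReal ((((4*C+1) * 2^((4*C+1)*(4*C+1)) * n^(m-1) : ℕ) : ℝ) * p^m) := by
          rw [ENNReal.ofReal_mul (Nat.cast_nonneg _), ENNReal.ofReal_pow h0,
            ENNReal.ofReal_natCast]
      _ ≤ ENNReal.ofReal (((4*C+1) * 2^((4*C+1)*(4*C+1)) : ℝ) * (10 * Real.log n)^m / n) := by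
          refine ENNReal.ofReal_le_ofReal ?_
          push_cast
          have hp : p^m ≤ ((10 * Real.log n) / n)^m := pow_le_pow_left₀ h0 hple m
          calc ((4*C+1) : ℝ) * 2^((4*C+1)*(4*C+1)) * (n:ℝ)^(m-1) * p^m
              ≤ ((4*C+1) : ℝ) * 2^((4*C+1)*(4*C+1)) * (n:ℝ)^(m-1) * ((10 * Real.log n) / n)^m := by
                refine mul_le_mul_of_nonneg_left hp ?_
                positivity
            _ = ((4*C+1) : ℝ) * 2^((4*C+1)*(4*C+1)) * ((10 * Real.log n)^m / n) := by
                rw [mul_assoc (((4*C+1) : ℝ) * 2^((4*C+1)*(4*C+1)))]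
                rw [pow_identity hn hm1]
            _ = ((4*C+1) : ℝ) * 2^((4*C+1)*(4*C+1)) * (10 * Real.log n)^m / n := by
                ring

lemma psi_tendsto (C : ℕ) :
    Tendsto (fun n : ℕ => ∑ m ∈ Finset.range (4*C+1), (if m = 0 then (0:ℝ) else
      ((4*C+1) * 2^((4*C+1)*(4*C+1)) : ℝ) * (10 * Real.log n)^m / n)) atTop (nhds 0) := by
  have h := tendsto_finset_sum (Finset.range (4*C+1))
    (f := fun m (n : ℕ) => (if m = 0 then (0:ℝ) else
      ((4*C+1) * 2^((4*C+1)*(4*C+1)) : ℝ) * (10 * Real.log n)^m / n))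
    (x := atTop) (a := fun _ => (0:ℝ)) ?_
  · simpa using h
  · intro m _
    by_cases hm : m = 0
    · simp only [hm, if_pos]
      exact tendsto_const_nhds
    · simp only [if_neg hm]
      have h1 := Real.tendsto_pow_log_div_mul_add_atTop 1 0 m one_ne_zero
      have h2 := (h1.const_mul ((((4*C+1) * 2^((4*C+1)*(4*C+1)) : ℝ)) * 10^m)).comp
        (tendsto_natCast_atTop_atTop (R := ℝ))
      simp only [mul_zero] at h2
      refine h2.congr ?_
      intro n
      simp only [Function.comp_apply]
      ring

end St6


theorem statement6 (w : ℕ → ℝ) (hw : Tendsto w atTop atTop) (p : ℕ → ℝ)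
    (hp : ∀ n : ℕ,
      (Real.log n + Real.log (Real.log n) + w n) / (n : ℝ) ≤ p n ∧
        p n ≤ 10 * Real.log n / (n : ℝ))
    (C : ℕ) (hC : 0 < C) :
    Tendsto (fun n : ℕ => gnp n (p n)
      {ω | ∀ u v : Fin n, u ≠ v →
        Set.ncard {q : (graphOf ω).Walk u v | q.IsTrail ∧ q.length ≤ C} ≤ 3})
      atTop (nhds 1) := by
  have hlim10 : Tendsto (fun n : ℕ => 10 * Real.log n / n) atTop (nhds 0) := by
    have h1 := Real.tendsto_pow_log_div_mul_add_atTop 1 0 1 one_ne_zero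
    have h2 := (h1.const_mul 10).comp (tendsto_natCast_atTop_atTop (R := ℝ))
    simp only [mul_zero] at h2
    refine h2.congr ?_
    intro n
    simp only [Function.comp_apply]
    ring
  have hple1 : ∀ᶠ n in atTop, p n ≤ 1 := by
    have h := hlim10.eventually_lt_const (show (0:ℝ) < 1 by norm_num)
    filter_upwards [h] with n hn
    exact le_of_lt (lt_of_le_of_lt (hp n).2 hn)
  have hp0 : ∀ᶠ n in atTop, 0 ≤ p n := by
    have hw0 := hw.eventually_ge_atTop 0
    have hn3 : ∀ᶠ n : ℕ in atTop, 3 ≤ n := eventually_ge_atTop 3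
    filter_upwards [hw0, hn3] with n hwn hn3
    refine le_trans ?_ (hp n).1
    have hn0 : (0:ℝ) < n := by
      have : (3:ℝ) ≤ n := by exact_mod_cast hn3
      linarith
    apply div_nonneg _ (le_of_lt hn0)
    have hlogn : 1 ≤ Real.log n := by
      rw [Real.le_log_iff_exp_le hn0]
      calc Real.exp 1 ≤ 2.7182818286 := le_of_lt Real.exp_one_lt_d9
        _ ≤ (3:ℝ) := by norm_num
        _ ≤ n := by exact_mod_cast hn3
    have h2 : 0 ≤ Real.log (Real.log n) := Real.log_nonneg hlogn
    linarith
  have hbad : Tendsto (fun n : ℕ => gnp n (p n) (⋃ F ∈ St6.witnesses n C, St6.cyl F))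
      atTop (nhds 0) := by
    refine tendsto_of_tendsto_of_tendsto_of_le_of_le' tendsto_const_nhds
      (h := fun n : ℕ => ENNReal.ofReal (∑ m ∈ Finset.range (4*C+1), (if m = 0 then (0:ℝ) else
        ((4*C+1) * 2^((4*C+1)*(4*C+1)) : ℝ) * (10 * Real.log n)^m / n))) ?_
      (Eventually.of_forall (fun n => zero_le)) ?_
    · have h := ENNReal.tendsto_ofReal (St6.psi_tendsto C)
      simpa using h
    · filter_upwards [hp0, hple1, eventually_ge_atTop 1] with n h0 h1 hn
      exact St6.bad_le_psi n C (p n) h0 h1 hn (hp n).2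
  refine tendsto_of_tendsto_of_tendsto_of_le_of_le'
    (g := fun n : ℕ => 1 - gnp n (p n) (⋃ F ∈ St6.witnesses n C, St6.cyl F))
    (h := fun _ : ℕ => (1 : ENNReal)) ?_ tendsto_const_nhds ?_ ?_
  · have h := ENNReal.Tendsto.sub
      (tendsto_const_nhds : Tendsto (fun _ : ℕ => (1:ENNReal)) atTop (nhds 1))
      hbad (Or.inl ENNReal.one_ne_top)
    simpa using h
  · filter_upwards [hp0, hple1] with n h0 h1
    rw [tsub_le_iff_right]
    rw [← St6.gnp_univ n (p n) h0 h1]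
    refine le_trans (measure_mono ?_) (measure_union_le _ _)
    intro ω _
    by_cases hg : ω ∈ {ω : Sym2 (Fin n) → Bool | ∀ u v : Fin n, u ≠ v →
        Set.ncard {q : (graphOf ω).Walk u v | q.IsTrail ∧ q.length ≤ C} ≤ 3}
    · exact Or.inl hg
    · exact Or.inr (St6.compl_good_subset n C hg)
  · filter_upwards [hp0, hple1] with n h0 h1
    rw [← St6.gnp_univ n (p n) h0 h1]
    exact measure_mono (Set.subset_univ _)
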